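/- Let f: R → S be a ring homomorphism and let C be a definable subcategory of Mod-S. Then the restriction C|_R equals the class of all right R-modules M′ such that M′ is a pure submodule of M_R for some M ∈ C (where M_R is M viewed as an R-module via f). -/

import Mathlib

/-!
Core framework for formalizing statements from
"Tensor and direct extension of definable subcategories" (M. Prest).

Conventions:
* A *right* `R`-module is a type with `[AddCommGroup M] [Module Rᵐᵒᵖ M]`;
  the right action of `r : R` on `a : M` is `MulOpposite.op r • a`.
* A *left* `R`-module is a type with `[AddCommGroup L] [Module R L]`.
* An `(R,S)`-bimodule is a type with a left `R`-action and a right `S`-action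
  which commute: `[Module R B] [Module Sᵐᵒᵖ B] [SMulCommClass R Sᵐᵒᵖ B]`.
-/

open MulOpposite

universe u v

namespace MTM

/-- A pp formula for (right) `R`-modules, with free variables indexed by `ι`,
bound variables indexed by `κ` and equations indexed by `ε`:
`∃ ȳ (x̄ A + ȳ B = 0)`. -/
structure PP (R : Type u) [Ring R] (ι : Type) : Type (max u 1) where
  κ : Type
  ε : Type
  [fintκ : Fintype κ]
  [fintε : Fintype ε]
  A : Matrix ι ε R
  B : Matrix κ ε R

attribute [instance] PP.fintκ PP.fintε

namespace PP

variable {R : Type u} [Ring R] {S : Type u} [Ring S] {ι : Type} [Fintype ι]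

/-- The solution set of a pp formula in a right `R`-module. -/
def sol (φ : PP R ι) (M : Type v) [AddCommGroup M] [Module Rᵐᵒᵖ M] : Set (ι → M) :=
  { a | ∃ b : φ.κ → M, ∀ j : φ.ε,
      (∑ i, op (φ.A i j) • a i) + (∑ k, op (φ.B k j) • b k) = 0 }

/-- The solution set of a pp formula in a left `R`-module (the formula is then read
with coefficients acting on the left). -/
def solL (φ : PP R ι) (L : Type v) [AddCommGroup L] [Module R L] : Set (ι → L) :=
  { a | ∃ b : φ.κ → L, ∀ j : φ.ε,
      (∑ i, φ.A i j • a i) + (∑ k, φ.B k j • b k) = 0 }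

/-- `φ ≤ ψ` : every solution of `φ` is a solution of `ψ`, in every right `R`-module. -/
def Le (φ ψ : PP R ι) : Prop :=
  ∀ (M : Type u) [AddCommGroup M] [Module Rᵐᵒᵖ M], φ.sol M ⊆ ψ.sol M

/-- The elementary dual `Dφ = ∃ z̄ (x̄ = A z̄ ∧ B z̄ = 0)` of a pp formula for right modules;
it is a pp formula for left `R`-modules (to be interpreted via `solL`). -/
noncomputable def dual (φ : PP R ι) : PP R ι where
  κ := φ.ε
  ε := ι ⊕ φ.κ
  A := fun i e =>
    letI := Classical.decEq ι
    Sum.elim (fun i' => if i = i' then (1 : R) else 0) (fun _ => (0 : R)) e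
  B := fun z e => Sum.elim (fun i' => -(φ.A i' z)) (fun k => φ.B k z) e

/-- Transport of a pp formula along a ring homomorphism (`f⁎φ`). -/
def map (f : R →+* S) (φ : PP R ι) : PP S ι :=
  { κ := φ.κ, ε := φ.ε, A := fun i j => f (φ.A i j), B := fun k j => f (φ.B k j) }

end PP

variable (R : Type u) [Ring R] (S : Type u) [Ring S]

/-- A pp-pair `φ/ψ` for right `R`-modules: pp formulas (in `n` free variables)
with `ψ(M) ≤ φ(M)` for every right `R`-module `M`. -/
structure PPPair : Type (u + 1) where
  n : ℕ
  num : PP R (Fin n)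
  den : PP R (Fin n)
  le : ∀ (M : Type u) [AddCommGroup M] [Module Rᵐᵒᵖ M], den.sol M ⊆ num.sol M

/-- A pp-pair for left `R`-modules. -/
structure PPPairL : Type (u + 1) where
  n : ℕ
  num : PP R (Fin n)
  den : PP R (Fin n)
  le : ∀ (L : Type u) [AddCommGroup L] [Module R L], den.solL L ⊆ num.solL L

variable {R}

/-- A pp-pair is closed on a right module `M` if the two solution sets agree. -/
def PPPair.ClosedOn (p : PPPair R) (M : Type v) [AddCommGroup M] [Module Rᵐᵒᵖ M] : Prop :=
  p.num.sol M = p.den.sol M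

/-- A pp-pair is closed on a left module `L` if the two solution sets agree. -/
def PPPairL.ClosedOn (p : PPPairL R) (L : Type v) [AddCommGroup L] [Module R L] : Prop :=
  p.num.solL L = p.den.solL L

variable (R)

/-- The subcategory (class of modules, as a set of objects of `Mod-R`) defined by
closure of a set of pp-pairs. -/
def definedBy (Φ : Set (PPPair R)) : Set (ModuleCat.{u} Rᵐᵒᵖ) :=
  { M | ∀ p ∈ Φ, p.ClosedOn M }

/-- The subcategory of left modules defined by closure of a set of pp-pairs. -/
def definedByL (Φ : Set (PPPairL R)) : Set (ModuleCat.{u} R) :=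
  { L | ∀ p ∈ Φ, p.ClosedOn L }

/-- A class of right `R`-modules is a definable subcategory if it is the class of
modules on which each pp-pair in some set of pp-pairs is closed. -/
def IsDefinable (D : Set (ModuleCat.{u} Rᵐᵒᵖ)) : Prop :=
  ∃ Φ : Set (PPPair R), D = definedBy R Φ

/-- Definability for classes of left `R`-modules. -/
def IsDefinableL (D : Set (ModuleCat.{u} R)) : Prop :=
  ∃ Φ : Set (PPPairL R), D = definedByL R Φ

/-- `⟨X⟩`: the smallest definable subcategory of `Mod-R` containing `X`. -/
def gen (X : Set (ModuleCat.{u} Rᵐᵒᵖ)) : Set (ModuleCat.{u} Rᵐᵒᵖ) :=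
  ⋂₀ { D | IsDefinable R D ∧ X ⊆ D }

/-- `⟨X⟩` for classes of left modules. -/
def genL (X : Set (ModuleCat.{u} R)) : Set (ModuleCat.{u} R) :=
  ⋂₀ { D | IsDefinableL R D ∧ X ⊆ D }

/-- `φ ≤_𝒳 ψ` for a class `𝒳` of right `R`-modules. -/
def LeOn (𝒳 : Set (ModuleCat.{u} Rᵐᵒᵖ)) {ι : Type} [Fintype ι] (φ ψ : PP R ι) : Prop :=
  ∀ M ∈ 𝒳, φ.sol M ⊆ ψ.sol M

/-- A pure embedding of right `R`-modules: an injective linear map which reflects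
solution sets of pp formulas. -/
def IsPureEmb {M N : Type*} [AddCommGroup M] [Module Rᵐᵒᵖ M]
    [AddCommGroup N] [Module Rᵐᵒᵖ N] (f : M →ₗ[Rᵐᵒᵖ] N) : Prop :=
  Function.Injective f ∧
    ∀ (ι : Type) (_ : Fintype ι) (φ : PP R ι) (a : ι → M),
      (fun i => f (a i)) ∈ φ.sol N → a ∈ φ.sol M

/-- A pure-injective module: every pure embedding out of it splits. -/
def IsPureInj (N : Type u) [AddCommGroup N] [Module Rᵐᵒᵖ N] : Prop :=
  ∀ (M : Type u) [AddCommGroup M] [Module Rᵐᵒᵖ M] (g : N →ₗ[Rᵐᵒᵖ] M),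
    IsPureEmb R g → ∃ h : M →ₗ[Rᵐᵒᵖ] N, h.comp g = LinearMap.id

/-- `N` is an elementary cogenerator for the definable subcategory `D`:
a pure-injective member of `D` such that every member of `D` purely embeds in a
direct power of `N`. -/
def IsElemCogen (D : Set (ModuleCat.{u} Rᵐᵒᵖ)) (N : ModuleCat.{u} Rᵐᵒᵖ) : Prop :=
  N ∈ D ∧ IsPureInj R N ∧
    ∀ M ∈ D, ∃ (I : Type u) (g : M →ₗ[Rᵐᵒᵖ] (I → N)), IsPureEmb R g

/-- A pure-injective hull of `X`: a minimal pure embedding into a pure-injective. -/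
def IsPureInjHull {X H : Type u} [AddCommGroup X] [Module Rᵐᵒᵖ X]
    [AddCommGroup H] [Module Rᵐᵒᵖ H] (h : X →ₗ[Rᵐᵒᵖ] H) : Prop :=
  IsPureEmb R h ∧ IsPureInj R H ∧
    ∀ (Y : Type u) [AddCommGroup Y] [Module Rᵐᵒᵖ Y] (g : H →ₗ[Rᵐᵒᵖ] Y),
      IsPureEmb R (g.comp h) → IsPureEmb R g

section RingHom

variable (f : R →+* S)

/-- Restriction of scalars of a (bundled) right `S`-module along `f : R →+* S`. -/
noncomputable def resMod (M : ModuleCat.{u} Sᵐᵒᵖ) : ModuleCat.{u} Rᵐᵒᵖ :=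
  (ModuleCat.restrictScalars (RingHom.op f)).obj M

/-- The (definable) restriction `C|_R` of a definable subcategory `C` of `Mod-S`
along `f : R → S` : the subcategory of `Mod-R` defined by all pp-pairs `φ/ψ` for
`R`-modules such that `f⁎φ/f⁎ψ` is closed on `C`. -/
def restrictSubcat (C : Set (ModuleCat.{u} Sᵐᵒᵖ)) : Set (ModuleCat.{u} Rᵐᵒᵖ) :=
  definedBy R { p : PPPair R | ∀ M ∈ C, (p.num.map f).sol M = (p.den.map f).sol M }

/-- The definable trace of `Mod-S` in `Mod-R` along `f`. -/
def DefTr : Set (ModuleCat.{u} Rᵐᵒᵖ) := restrictSubcat R S f Set.univ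

/-- The direct extension `D^S` of a definable subcategory `D` of `Mod-R`:
those `S`-modules whose restriction along `f` lies in `D`. -/
def directExt (D : Set (ModuleCat.{u} Rᵐᵒᵖ)) : Set (ModuleCat.{u} Sᵐᵒᵖ) :=
  { M | resMod R S f M ∈ D }

end RingHom

end MTM
-- Tensor product over a (possibly noncommutative) ring.
namespace MTM

open MulOpposite TensorProduct

universe x
variable (R : Type u) [Ring R] (S : Type u) [Ring S]

section Tensor

variable (M : Type u) [AddCommGroup M] [Module Rᵐᵒᵖ M]
variable (B : Type u) [AddCommGroup B] [Module R B]

/-- The subgroup of `M ⊗_ℤ B` of balancing relations. -/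
def tensorRel : Submodule ℤ (TensorProduct ℤ M B) :=
  Submodule.span ℤ
    { x | ∃ (r : R) (m : M) (b : B), x = (op r • m) ⊗ₜ[ℤ] b - m ⊗ₜ[ℤ] (r • b) }

/-- The tensor product `M ⊗_R B` of a right `R`-module and a left `R`-module,
as the quotient of `M ⊗_ℤ B` by the balancing relations. -/
abbrev RTensor : Type u := TensorProduct ℤ M B ⧸ tensorRel R M B

/-- `m ⊗ b` in `M ⊗_R B`. -/
noncomputable def rtmul (m : M) (b : B) : RTensor R M B := Submodule.Quotient.mk (m ⊗ₜ[ℤ] b)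

variable {M B}
variable {M' : Type u} [AddCommGroup M'] [Module Rᵐᵒᵖ M']
variable {B' : Type u} [AddCommGroup B'] [Module R B']

theorem rel_le_B (g : B →ₗ[R] B') :
    tensorRel R M B ≤
      (tensorRel R M B').comap (LinearMap.lTensor M g.toAddMonoidHom.toIntLinearMap) := by
  intro x hx
  change LinearMap.lTensor M g.toAddMonoidHom.toIntLinearMap x ∈ tensorRel R M B'
  refine Submodule.span_induction ?_ ?_ ?_ ?_ hx
  · rintro _ ⟨r, m, b, rfl⟩
    simp only [map_sub, LinearMap.lTensor_tmul,
      AddMonoidHom.coe_toIntLinearMap, LinearMap.toAddMonoidHom_coe]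
    rw [g.map_smul]
    exact Submodule.subset_span ⟨r, m, g b, rfl⟩
  · rw [map_zero]
    exact zero_mem _
  · intro x y _ _ hx hy
    rw [map_add]
    exact add_mem hx hy
  · intro a x _ hx
    rw [map_zsmul]
    exact zsmul_mem hx a

theorem rel_le_M (h : M →ₗ[Rᵐᵒᵖ] M') :
    tensorRel R M B ≤
      (tensorRel R M' B).comap (LinearMap.rTensor B h.toAddMonoidHom.toIntLinearMap) := by
  intro x hx
  change LinearMap.rTensor B h.toAddMonoidHom.toIntLinearMap x ∈ tensorRel R M' B
  refine Submodule.span_induction ?_ ?_ ?_ ?_ hx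
  · rintro _ ⟨r, m, b, rfl⟩
    simp only [map_sub, LinearMap.rTensor_tmul,
      AddMonoidHom.coe_toIntLinearMap, LinearMap.toAddMonoidHom_coe]
    rw [h.map_smul]
    exact Submodule.subset_span ⟨r, h m, b, rfl⟩
  · rw [map_zero]
    exact zero_mem _
  · intro x y _ _ hx hy
    rw [map_add]
    exact add_mem hx hy
  · intro a x _ hx
    rw [map_zsmul]
    exact zsmul_mem hx a

/-- Functoriality of `M ⊗_R -` in left `R`-module maps (as a `ℤ`-linear map). -/
noncomputable def mapB (g : B →ₗ[R] B') : RTensor R M B →ₗ[ℤ] RTensor R M B' :=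
  Submodule.mapQ _ _ _ (rel_le_B R g)

/-- Functoriality of `- ⊗_R B` in right `R`-module maps (as a `ℤ`-linear map). -/
noncomputable def mapM (h : M →ₗ[Rᵐᵒᵖ] M') : RTensor R M B →ₗ[ℤ] RTensor R M' B :=
  Submodule.mapQ _ _ _ (rel_le_M R h)

@[simp] theorem mapB_mk (g : B →ₗ[R] B') (y : TensorProduct ℤ M B) :
    mapB R g (Submodule.Quotient.mk y) =
      Submodule.Quotient.mk (LinearMap.lTensor M g.toAddMonoidHom.toIntLinearMap y) :=
  rfl

@[simp] theorem mapM_mk (h : M →ₗ[Rᵐᵒᵖ] M') (y : TensorProduct ℤ M B) :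
    mapM R h (Submodule.Quotient.mk y) =
      Submodule.Quotient.mk (LinearMap.rTensor B h.toAddMonoidHom.toIntLinearMap y) :=
  rfl

section SAction

variable [Module Sᵐᵒᵖ B] [SMulCommClass R Sᵐᵒᵖ B]

/-- The right action of `s : S` on an `(R,S)`-bimodule, as a left `R`-linear map. -/
def sEndo (s : Sᵐᵒᵖ) : B →ₗ[R] B where
  toFun b := s • b
  map_add' x y := smul_add s x y
  map_smul' r b := (smul_comm r s b).symm

variable (M B)

/-- The right `S`-action on `M ⊗_R B` as a ring homomorphism `Sᵐᵒᵖ → End_ℤ (M ⊗_R B)`. -/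
noncomputable def rho : Sᵐᵒᵖ →+* Module.End ℤ (RTensor R M B) where
  toFun s := mapB R (sEndo R S (B := B) s)
  map_one' := by
    refine Submodule.linearMap_qext _ (TensorProduct.ext' fun m b => ?_)
    show mapB R (sEndo R S (B := B) 1) (Submodule.Quotient.mk (m ⊗ₜ[ℤ] b)) =
      Submodule.Quotient.mk (m ⊗ₜ[ℤ] b)
    simp only [mapB_mk, LinearMap.lTensor_tmul]
    simp [sEndo]
  map_mul' s s' := by
    refine Submodule.linearMap_qext _ (TensorProduct.ext' fun m b => ?_)
    show mapB R (sEndo R S (B := B) (s * s')) (Submodule.Quotient.mk (m ⊗ₜ[ℤ] b)) =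
      mapB R (sEndo R S (B := B) s) (mapB R (sEndo R S (B := B) s')
        (Submodule.Quotient.mk (m ⊗ₜ[ℤ] b)))
    simp only [mapB_mk, LinearMap.lTensor_tmul]
    simp only [AddMonoidHom.coe_toIntLinearMap, LinearMap.toAddMonoidHom_coe]
    simp [sEndo, mul_smul]
  map_zero' := by
    refine Submodule.linearMap_qext _ (TensorProduct.ext' fun m b => ?_)
    show mapB R (sEndo R S (B := B) 0) (Submodule.Quotient.mk (m ⊗ₜ[ℤ] b)) = 0
    simp only [mapB_mk, LinearMap.lTensor_tmul]
    simp [sEndo]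
  map_add' s s' := by
    refine Submodule.linearMap_qext _ (TensorProduct.ext' fun m b => ?_)
    show mapB R (sEndo R S (B := B) (s + s')) (Submodule.Quotient.mk (m ⊗ₜ[ℤ] b)) =
      mapB R (sEndo R S (B := B) s) (Submodule.Quotient.mk (m ⊗ₜ[ℤ] b)) +
        mapB R (sEndo R S (B := B) s') (Submodule.Quotient.mk (m ⊗ₜ[ℤ] b))
    simp only [mapB_mk, LinearMap.lTensor_tmul]
    simp only [AddMonoidHom.coe_toIntLinearMap, LinearMap.toAddMonoidHom_coe]
    simp [sEndo, add_smul, TensorProduct.tmul_add]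

/-- The right `S`-module structure on `M ⊗_R B` for an `(R,S)`-bimodule `B`. -/
noncomputable instance instModS : Module Sᵐᵒᵖ (RTensor R M B) :=
  Module.compHom _ (rho R S M B)

theorem smul_mk (s : Sᵐᵒᵖ) (y : TensorProduct ℤ M B) :
    s • (Submodule.Quotient.mk y : RTensor R M B) =
      Submodule.Quotient.mk
        (LinearMap.lTensor M ((sEndo R S (B := B) s).toAddMonoidHom.toIntLinearMap) y) :=
  rfl

@[simp] theorem smul_rtmul (s : Sᵐᵒᵖ) (m : M) (b : B) :
    s • rtmul R M B m b = rtmul R M B m (s • b) :=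
  rfl

end SAction

end Tensor

end MTM
namespace MTM

open MulOpposite TensorProduct

variable (R : Type u) [Ring R] (S : Type u) [Ring S]

section TensorMaps

variable (M : Type u) [AddCommGroup M] [Module Rᵐᵒᵖ M]
variable {M' : Type u} [AddCommGroup M'] [Module Rᵐᵒᵖ M']
variable (B : Type u) [AddCommGroup B] [Module R B] [Module Sᵐᵒᵖ B] [SMulCommClass R Sᵐᵒᵖ B]
variable {B' : Type u} [AddCommGroup B'] [Module R B'] [Module Sᵐᵒᵖ B'] [SMulCommClass R Sᵐᵒᵖ B']

/-- Functoriality of `M ⊗_R -` in maps of `(R,S)`-bimodules, as a map of right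
`S`-modules. -/
noncomputable def mapBS (g : B →ₗ[R] B') (hg : ∀ (s : Sᵐᵒᵖ) (b : B), g (s • b) = s • g b) :
    RTensor R M B →ₗ[Sᵐᵒᵖ] RTensor R M B' where
  toFun := mapB R g
  map_add' := map_add _
  map_smul' s x := by
    obtain ⟨y, rfl⟩ := Submodule.Quotient.mk_surjective _ x
    show mapB R g (s • Submodule.Quotient.mk y) = s • mapB R g (Submodule.Quotient.mk y)
    rw [smul_mk R S, mapB_mk, mapB_mk, smul_mk R S,
      ← LinearMap.comp_apply, ← LinearMap.comp_apply, ← LinearMap.lTensor_comp,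
      ← LinearMap.lTensor_comp]
    have hcomp : g.toAddMonoidHom.toIntLinearMap ∘ₗ
          (sEndo R S (B := B) s).toAddMonoidHom.toIntLinearMap =
        (sEndo R S (B := B') s).toAddMonoidHom.toIntLinearMap ∘ₗ
          g.toAddMonoidHom.toIntLinearMap := by
      ext b
      exact hg s b
    rw [hcomp]

/-- Functoriality of `- ⊗_R B` in maps of right `R`-modules, as a map of right
`S`-modules. -/
noncomputable def mapMS (h : M →ₗ[Rᵐᵒᵖ] M') :
    RTensor R M B →ₗ[Sᵐᵒᵖ] RTensor R M' B where
  toFun := mapM R h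
  map_add' := map_add _
  map_smul' s x := by
    obtain ⟨y, rfl⟩ := Submodule.Quotient.mk_surjective _ x
    show mapM R h (s • Submodule.Quotient.mk y) = s • mapM R h (Submodule.Quotient.mk y)
    rw [smul_mk R S, mapM_mk, mapM_mk, smul_mk R S,
      ← LinearMap.comp_apply, ← LinearMap.comp_apply, LinearMap.rTensor_comp_lTensor,
      LinearMap.lTensor_comp_rTensor]

end TensorMaps

section Canonical

variable (M : Type u) [AddCommGroup M] [Module Rᵐᵒᵖ M]

/-- The canonical map `M ⊗_R (∏ᵢ Lᵢ) → ∏ᵢ (M ⊗_R Lᵢ)` for a family of left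
`R`-modules, as a `ℤ`-linear map. -/
noncomputable def canonicalL {ι' : Type u} (L : ι' → Type u)
    [∀ i, AddCommGroup (L i)] [∀ i, Module R (L i)] :
    RTensor R M (∀ i, L i) →ₗ[ℤ] ∀ i, RTensor R M (L i) :=
  LinearMap.pi fun i => mapB R (LinearMap.proj i)

/-- The canonical map `M ⊗_R (∏ᵢ Lᵢ) → ∏ᵢ (M ⊗_R Lᵢ)` for a family of
`(R,S)`-bimodules, as a map of right `S`-modules. -/
noncomputable def canonicalB {ι' : Type u} (L : ι' → Type u)
    [∀ i, AddCommGroup (L i)] [∀ i, Module R (L i)] [∀ i, Module Sᵐᵒᵖ (L i)]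
    [∀ i, SMulCommClass R Sᵐᵒᵖ (L i)] :
    RTensor R M (∀ i, L i) →ₗ[Sᵐᵒᵖ] ∀ i, RTensor R M (L i) :=
  LinearMap.pi fun i => mapBS R S M (∀ j, L j) (LinearMap.proj i) (fun _ _ => rfl)

/-- The canonical map `(∏_λ M_λ) ⊗_R B → ∏_λ (M_λ ⊗_R B)` for a family of right
`R`-modules and an `(R,S)`-bimodule `B`, as a map of right `S`-modules. -/
noncomputable def canonicalM {ι' : Type u} (N : ι' → Type u)
    [∀ i, AddCommGroup (N i)] [∀ i, Module Rᵐᵒᵖ (N i)]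
    (B : Type u) [AddCommGroup B] [Module R B] [Module Sᵐᵒᵖ B] [SMulCommClass R Sᵐᵒᵖ B] :
    RTensor R (∀ i, N i) B →ₗ[Sᵐᵒᵖ] ∀ i, RTensor R (N i) B :=
  LinearMap.pi fun i => mapMS R S (∀ j, N j) B (LinearMap.proj i)

end Canonical

section UnitMap

variable (M : Type u) [AddCommGroup M] [Module Rᵐᵒᵖ M]
variable (B : Type u) [AddCommGroup B] [Module R B] [Module Rᵐᵒᵖ B] [SMulCommClass R Rᵐᵒᵖ B]

/-- For an `(R,R)`-bimodule `B` and a central-ish element `e` (e.g. `1 ∈ S` for a ring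
extension `R → S`), the canonical map `M → M ⊗_R B`, `a ↦ a ⊗ e`, as a map of right
`R`-modules. -/
noncomputable def unitMap (e : B) (he : ∀ r : R, r • e = op r • e) :
    M →ₗ[Rᵐᵒᵖ] RTensor R M B where
  toFun m := rtmul R M B m e
  map_add' m m' := by
    show Submodule.Quotient.mk _ = Submodule.Quotient.mk _ + Submodule.Quotient.mk _
    rw [← Submodule.Quotient.mk_add, TensorProduct.add_tmul]
  map_smul' r m := by
    show rtmul R M B (r • m) e = r • rtmul R M B m e
    rw [smul_rtmul]
    rw [rtmul, rtmul, Submodule.Quotient.eq]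
    have : (r • e : B) = (r.unop : R) • e := (he r.unop).symm
    rw [this]
    exact Submodule.subset_span ⟨r.unop, m, e, by rw [op_unop]⟩

end UnitMap

end MTM
namespace MTM

open MulOpposite

variable (R : Type u) [Ring R] (S : Type u) [Ring S]

/-! ### pp formulas for `(R,S)`-bimodules -/

/-- The action of a formal coefficient `∑ (r,s)` of the bimodule language on an
element of an `(R,S)`-bimodule: `b ↦ ∑ r b s`. -/
def cAct (c : List (R × S)) {B : Type v} [AddCommGroup B] [Module R B] [Module Sᵐᵒᵖ B]
    (b : B) : B :=
  (c.map fun p => p.1 • (op p.2 • b)).sum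

/-- A pp formula for `(R,S)`-bimodules (equivalently, for right `Rᵒᵖ ⊗ S`-modules):
coefficients are formal sums of pairs `(r,s)`, acting by `x ↦ ∑ r x s`. -/
structure BiPP (ι : Type) : Type (max u 1) where
  κ : Type
  ε : Type
  [fintκ : Fintype κ]
  [fintε : Fintype ε]
  A : Matrix ι ε (List (R × S))
  B : Matrix κ ε (List (R × S))

attribute [instance] BiPP.fintκ BiPP.fintε

variable {R S} in
/-- Solution set of a bimodule pp formula in an `(R,S)`-bimodule. -/
def BiPP.sol {ι : Type} [Fintype ι] (θ : BiPP R S ι) (Bm : Type v) [AddCommGroup Bm]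
    [Module R Bm] [Module Sᵐᵒᵖ Bm] : Set (ι → Bm) :=
  { a | ∃ b : θ.κ → Bm, ∀ j : θ.ε,
      (∑ i, cAct R S (θ.A i j) (a i)) + (∑ k, cAct R S (θ.B k j) (b k)) = 0 }

/-- A bundled `(R,S)`-bimodule. -/
structure Bimod : Type (u + 1) where
  carrier : Type u
  [addCommGroup : AddCommGroup carrier]
  [modR : Module R carrier]
  [modSop : Module Sᵐᵒᵖ carrier]
  [smulComm : SMulCommClass R Sᵐᵒᵖ carrier]

attribute [instance] Bimod.addCommGroup Bimod.modR Bimod.modSop Bimod.smulComm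

instance : CoeSort (Bimod R S) (Type u) := ⟨Bimod.carrier⟩

/-- Bundling an `(R,S)`-bimodule. -/
def Bimod.of (B : Type u) [AddCommGroup B] [Module R B] [Module Sᵐᵒᵖ B]
    [SMulCommClass R Sᵐᵒᵖ B] : Bimod R S :=
  ⟨B⟩

/-- A pp-pair for `(R,S)`-bimodules. -/
structure BiPPPair : Type (max u 1) where
  n : ℕ
  num : BiPP R S (Fin n)
  den : BiPP R S (Fin n)
  le : ∀ Bm : Bimod R S, den.sol Bm ⊆ num.sol Bm

variable {R S} in
/-- Closedness of a bimodule pp-pair on a bimodule. -/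
def BiPPPair.ClosedOn (p : BiPPPair R S) (Bm : Type v) [AddCommGroup Bm] [Module R Bm]
    [Module Sᵐᵒᵖ Bm] : Prop :=
  p.num.sol Bm = p.den.sol Bm

/-- The class of bimodules defined by closure of a set of bimodule pp-pairs. -/
def biDefinedBy (Φ : Set (BiPPPair R S)) : Set (Bimod R S) :=
  { Bm | ∀ p ∈ Φ, p.ClosedOn Bm }

/-- Definable subcategories of the category `R-Mod-S` of `(R,S)`-bimodules. -/
def IsDefinableBi (𝓑 : Set (Bimod R S)) : Prop :=
  ∃ Φ : Set (BiPPPair R S), 𝓑 = biDefinedBy R S Φ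

/-- The smallest definable subcategory of `R-Mod-S` containing `X`. -/
def genBi (X : Set (Bimod R S)) : Set (Bimod R S) :=
  ⋂₀ { 𝓑 | IsDefinableBi R S 𝓑 ∧ X ⊆ 𝓑 }

/-- `θ ≤_𝓑 θ'` for a class `𝓑` of bimodules. -/
def BiLeOn (𝓑 : Set (Bimod R S)) {ι : Type} [Fintype ι] (θ θ' : BiPP R S ι) : Prop :=
  ∀ Bm ∈ 𝓑, θ.sol Bm ⊆ θ'.sol Bm

/-! ### Partitioned tuples, `(σ:φ)` and atomicity with respect to a bimodule -/

/-- The index type of a `ν`-partitioned tuple: `k` blocks, the `t`-th of size `ν t`. -/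
abbrev PIdx {k : ℕ} (ν : Fin k → ℕ) : Type := (t : Fin k) × Fin (ν t)

/-- The tensor product of matching partitioned tuples: the `k`-tuple
`(ā₁ ⊗ b̄₁, …, ā_k ⊗ b̄_k)` where `ā_t ⊗ b̄_t = ∑_j a_{tj} ⊗ b_{tj}`. -/
noncomputable def ptensor (M : Type u) [AddCommGroup M] [Module Rᵐᵒᵖ M] (B : Type u)
    [AddCommGroup B] [Module R B] {k : ℕ} {ν : Fin k → ℕ}
    (a : PIdx ν → M) (b : PIdx ν → B) : Fin k → RTensor R M B :=
  fun t => ∑ j : Fin (ν t), rtmul R M B (a ⟨t, j⟩) (b ⟨t, j⟩)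

variable {R}

/-- The pp-type of `ā` in `M` is generated by `φ`: `pp^M(ā) = {ψ : φ ≤ ψ}`. -/
def GeneratedBy {ι : Type} [Fintype ι] {M : Type u} [AddCommGroup M] [Module Rᵐᵒᵖ M]
    (a : ι → M) (φ : PP R ι) : Prop :=
  ∀ ψ : PP R ι, a ∈ ψ.sol M ↔ φ.Le ψ

/-- The pp-type of `ā` in `M` is `𝒳`-generated by `φ`: `pp^M(ā) = {ψ : φ ≤_𝒳 ψ}`. -/
def GeneratedByOn (𝒳 : Set (ModuleCat.{u} Rᵐᵒᵖ)) {ι : Type} [Fintype ι] {M : Type u}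
    [AddCommGroup M] [Module Rᵐᵒᵖ M] (a : ι → M) (φ : PP R ι) : Prop :=
  ∀ ψ : PP R ι, a ∈ ψ.sol M ↔ LeOn R 𝒳 φ ψ

variable (R)

/-- An assignment `(σ, φ) ↦ (σ:φ)` of a bimodule pp formula to each pp formula `σ`
for right `S`-modules (in `k` free variables) and each matching partitioned pp
formula `φ` for right `R`-modules. -/
def ColonAsgn : Type (max u 1) :=
  ∀ (k : ℕ) (ν : Fin k → ℕ), PP S (Fin k) → PP R (PIdx ν) → BiPP R S (PIdx ν)

/-- The characterizing property of the assignment `(σ, φ) ↦ (σ:φ)`: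
(1) if `ā ∈ φ(M)` and `b̄ ∈ (σ:φ)(B)` then `ā ⊗ b̄ ∈ σ(M ⊗_R B)`;
(2) if `pp^M(ā)` is generated by `φ` then `ā ⊗ b̄ ∈ σ(M ⊗_R B)` iff `b̄ ∈ (σ:φ)(B)`. -/
def ColonSpec (c : ColonAsgn R S) : Prop :=
  ∀ (k : ℕ) (ν : Fin k → ℕ) (σ : PP S (Fin k)) (φ : PP R (PIdx ν))
    (M : Type u) [AddCommGroup M] [Module Rᵐᵒᵖ M]
    (Bm : Type u) [AddCommGroup Bm] [Module R Bm] [Module Sᵐᵒᵖ Bm]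
    [SMulCommClass R Sᵐᵒᵖ Bm] (a : PIdx ν → M) (b : PIdx ν → Bm),
    (a ∈ φ.sol M → b ∈ (c k ν σ φ).sol Bm →
      ptensor R M Bm a b ∈ σ.sol (RTensor R M Bm)) ∧
    (GeneratedBy a φ →
      (ptensor R M Bm a b ∈ σ.sol (RTensor R M Bm) ↔ b ∈ (c k ν σ φ).sol Bm))

/-- `M` is atomic with respect to the `(R,S)`-bimodule `B` (relative to a choice `c`
of the assignment `(σ,φ) ↦ (σ:φ)`): for every partitioned finite tuple `ā` from `M`
and every pp formula `σ` for right `S`-modules there is `φ ∈ pp^M(ā)` such that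
`(σ:φ)(B)` is the largest among the `(σ:ψ)(B)` with `ψ ∈ pp^M(ā)`. -/
def AtomicWrt (c : ColonAsgn R S) (M : Type u) [AddCommGroup M] [Module Rᵐᵒᵖ M]
    (Bm : Type u) [AddCommGroup Bm] [Module R Bm] [Module Sᵐᵒᵖ Bm] : Prop :=
  ∀ (k : ℕ) (ν : Fin k → ℕ) (σ : PP S (Fin k)) (a : PIdx ν → M),
    ∃ φ : PP R (PIdx ν), a ∈ φ.sol M ∧
      ∀ ψ : PP R (PIdx ν), a ∈ ψ.sol M → (c k ν σ ψ).sol Bm ⊆ (c k ν σ φ).sol Bm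

/-! ### Mittag-Leffler modules, atomic modules -/

/-- `M` is Mittag-Leffler: the canonical map `M ⊗_R ∏ᵢ Lᵢ → ∏ᵢ (M ⊗_R Lᵢ)` is
injective for every family of left `R`-modules. -/
def IsML (M : Type u) [AddCommGroup M] [Module Rᵐᵒᵖ M] : Prop :=
  ∀ (ι' : Type u) (L : ι' → Type u) (_ : ∀ i, AddCommGroup (L i))
    (_ : ∀ i, Module R (L i)), Function.Injective (canonicalL R M L)

/-- `M` is `𝒳`-Mittag-Leffler for a class `𝒳` of left `R`-modules. -/
def IsMLOn (𝒳 : Set (ModuleCat.{u} R)) (M : Type u) [AddCommGroup M] [Module Rᵐᵒᵖ M] :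
    Prop :=
  ∀ (ι' : Type u) (L : ι' → Type u) (_ : ∀ i, AddCommGroup (L i))
    (_ : ∀ i, Module R (L i)),
    (∀ i, ModuleCat.of R (L i) ∈ 𝒳) → Function.Injective (canonicalL R M L)

/-- `M` is `D`-atomic: the pp-type of every finite tuple from `M` is `D`-finitely
generated. -/
def AtomicOn (D : Set (ModuleCat.{u} Rᵐᵒᵖ)) (M : Type u) [AddCommGroup M]
    [Module Rᵐᵒᵖ M] : Prop :=
  ∀ (n : ℕ) (a : Fin n → M), ∃ φ : PP R (Fin n), GeneratedByOn D a φ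

/-- The elementary dual `⟨K⟩ᵈ ⊆ Mod-R` of the definable subcategory of `R-Mod`
generated by a class `K` of left `R`-modules: it is defined by the pp-pairs for right
`R`-modules whose (elementary) dual pp-pair is closed on `⟨K⟩`. -/
def dualCat (K : Set (ModuleCat.{u} R)) : Set (ModuleCat.{u} Rᵐᵒᵖ) :=
  definedBy R { p : PPPair R |
    ∀ L ∈ genL R K, (p.num.dual).solL L = (p.den.dual).solL L }

/-! ### Pure projectivity, finite genericity, pure cogenerators -/

/-- A left `R`-module is pure-projective if it is a direct summand of a direct sum of
finitely presented left `R`-modules. -/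
def IsPureProjL (B : Type u) [AddCommGroup B] [Module R B] : Prop :=
  ∃ (ι : Type u) (_ : DecidableEq ι) (F : ι → Type u) (_ : ∀ i, AddCommGroup (F i))
    (_ : ∀ i, Module R (F i)) (_ : ∀ i, Module.FinitePresentation R (F i))
    (e : B →ₗ[R] DirectSum ι F) (p : DirectSum ι F →ₗ[R] B), p.comp e = LinearMap.id

/-- `M` is finitely generic in the definable subcategory `D`: for every pp formula
`φ` there is a tuple from `M` whose pp-type is `D`-generated by `φ`. -/
def FinGeneric (D : Set (ModuleCat.{u} Rᵐᵒᵖ)) (M : Type u) [AddCommGroup M]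
    [Module Rᵐᵒᵖ M] : Prop :=
  ModuleCat.of Rᵐᵒᵖ M ∈ D ∧
    ∀ (ι : Type) (_ : Fintype ι) (φ : PP R ι), ∃ a : ι → M, GeneratedByOn D a φ

variable {R S}

/-- The pp-type of a tuple in a bimodule is `𝓑`-generated by `θ`. -/
def BiGeneratedByOn (𝓑 : Set (Bimod R S)) {ι : Type} [Fintype ι] {Bm : Type u}
    [AddCommGroup Bm] [Module R Bm] [Module Sᵐᵒᵖ Bm] (b : ι → Bm) (θ : BiPP R S ι) :
    Prop :=
  ∀ θ' : BiPP R S ι, b ∈ θ'.sol Bm ↔ BiLeOn R S 𝓑 θ θ'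

variable (R S)

/-- A bimodule is finitely generic in a definable subcategory `𝓑` of `R-Mod-S`. -/
def FinGenericBi (𝓑 : Set (Bimod R S)) (Bm : Type u) [AddCommGroup Bm] [Module R Bm]
    [Module Sᵐᵒᵖ Bm] [SMulCommClass R Sᵐᵒᵖ Bm] : Prop :=
  Bimod.of R S Bm ∈ 𝓑 ∧
    ∀ (ι : Type) (_ : Fintype ι) (θ : BiPP R S ι), ∃ b : ι → Bm, BiGeneratedByOn 𝓑 b θ

end MTM
namespace MTM

open MulOpposite

variable (R : Type u) [Ring R] (S : Type u) [Ring S]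

/-! ### Tensor extension of definable subcategories -/

section TensorExt

variable (B : Type u) [AddCommGroup B] [Module R B] [Module Sᵐᵒᵖ B] [SMulCommClass R Sᵐᵒᵖ B]

/-- The set `{M ⊗_R B : M ∈ D}` of right `S`-modules. -/
noncomputable def tensorExtSet (D : Set (ModuleCat.{u} Rᵐᵒᵖ)) : Set (ModuleCat.{u} Sᵐᵒᵖ) :=
  { N | ∃ M ∈ D, N = ModuleCat.of Sᵐᵒᵖ (RTensor R M B) }

/-- The tensor extension `D ⊗_R B`: the definable subcategory of `Mod-S` generated by
`{M ⊗_R B : M ∈ D}`. -/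
noncomputable def tensorExt (D : Set (ModuleCat.{u} Rᵐᵒᵖ)) : Set (ModuleCat.{u} Sᵐᵒᵖ) :=
  gen S (tensorExtSet R S B D)

end TensorExt

/-- `D ⊗ 𝓑` for a definable subcategory `D` of `Mod-R` and a definable subcategory
`𝓑` of `R-Mod-S`: the definable subcategory of `Mod-S` generated by the modules
`M ⊗_R B` with `M ∈ D`, `B ∈ 𝓑`. -/
noncomputable def tensorProd (D : Set (ModuleCat.{u} Rᵐᵒᵖ)) (𝓑 : Set (Bimod R S)) :
    Set (ModuleCat.{u} Sᵐᵒᵖ) :=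
  gen S { N | ∃ M ∈ D, ∃ Bm ∈ 𝓑, N = ModuleCat.of Sᵐᵒᵖ (RTensor R M Bm) }

/-! ### Directed colimits -/

open CategoryTheory CategoryTheory.Limits in
/-- `M` is a directed colimit of modules satisfying `P`. -/
def IsDirectedColimitOf (M : ModuleCat.{u} Rᵐᵒᵖ) (P : ModuleCat.{u} Rᵐᵒᵖ → Prop) :
    Prop :=
  ∃ (J : Type u) (_ : Preorder J) (_ : IsDirected J (· ≤ ·)) (_ : Nonempty J)
    (F : J ⥤ ModuleCat.{u} Rᵐᵒᵖ) (c : Cocone F),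
    Nonempty (IsColimit c) ∧ Nonempty (c.pt ≅ M) ∧ ∀ j, P (F.obj j)

/-! ### Elementary embeddings of rings -/

open FirstOrder in
/-- `f : R →+* S` is an elementary embedding of rings: there is a model-theoretic
elementary embedding (for the first-order language of rings) whose underlying
function is `f`.  (Elementary embeddings preserve and reflect all first-order
formulas at all tuples of parameters from `R`.) -/
def IsElemRingEmb (f : R →+* S) : Prop :=
  letI := FirstOrder.Ring.compatibleRingOfRing R
  letI := FirstOrder.Ring.compatibleRingOfRing S
  ∃ F : Language.ring.ElementaryEmbedding R S, ∀ r : R, F r = f r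

/-! ### Bimodule structures along a ring homomorphism -/

section AlongHom

variable (f : R →+* S)

/-- The left `R`-module structure on `S` along `f`. -/
def modLeft : Module R S := Module.compHom S f

/-- The right `R`-module structure on `S` along `f`. -/
def modRight : Module Rᵐᵒᵖ S := Module.compHom S (RingHom.op f)

/-- `S` is an `(R,S)`-bimodule along `f`. -/
theorem smulComm_RS :
    letI := modLeft R S f
    SMulCommClass R Sᵐᵒᵖ S := by
  letI := modLeft R S f
  constructor
  intro r s x
  show f r * (x * s.unop) = (f r * x) * s.unop
  rw [mul_assoc]

/-- `S` is an `(R,R)`-bimodule along `f`. -/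
theorem smulComm_RR :
    letI := modLeft R S f
    letI := modRight R S f
    SMulCommClass R Rᵐᵒᵖ S := by
  letI := modLeft R S f
  letI := modRight R S f
  constructor
  intro r r' x
  show f r * (x * f r'.unop) = (f r * x) * f r'.unop
  rw [mul_assoc]

end AlongHom

end MTM
namespace MTM

open MulOpposite

variable (R : Type u) [Ring R] (S : Type u) [Ring S]

/-- A pure embedding of `(R,S)`-bimodules: an injective map of bimodules which
reflects solution sets of bimodule pp formulas. -/
def IsBiPureEmb {B B' : Type u} [AddCommGroup B] [Module R B] [Module Sᵐᵒᵖ B]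
    [AddCommGroup B'] [Module R B'] [Module Sᵐᵒᵖ B']
    (g : B →ₗ[R] B') (_ : ∀ (s : Sᵐᵒᵖ) (b : B), g (s • b) = s • g b) : Prop :=
  Function.Injective g ∧
    ∀ (ι : Type) (_ : Fintype ι) (θ : BiPP R S ι) (a : ι → B),
      (fun i => g (a i)) ∈ θ.sol B' → a ∈ θ.sol B

/-- The ring `S`, viewed as an `(R,S)`-bimodule (and as an `(R,R)`-bimodule) along a
ring homomorphism `f : R →+* S`. -/
def SAlong (f : R →+* S) : Type u := S

namespace SAlong

variable (f : R →+* S)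

instance : AddCommGroup (SAlong R S f) := inferInstanceAs (AddCommGroup S)
instance : Module R (SAlong R S f) := Module.compHom S f
instance : Module Sᵐᵒᵖ (SAlong R S f) := inferInstanceAs (Module Sᵐᵒᵖ S)
instance : Module Rᵐᵒᵖ (SAlong R S f) := Module.compHom S (RingHom.op f)

instance : SMulCommClass R Sᵐᵒᵖ (SAlong R S f) := smulComm_RS R S f

instance : SMulCommClass R Rᵐᵒᵖ (SAlong R S f) := smulComm_RR R S f

/-- The element `1 ∈ S`. -/
def one : SAlong R S f := (1 : S)

theorem smul_one : ∀ r : R, r • (one R S f) = op r • (one R S f) := by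
  intro r
  show f r * (1 : S) = (1 : S) * f r
  rw [mul_one, one_mul]

end SAlong

end MTM

namespace MTM
namespace S3

variable {R : Type u} [Ring R]

section Toolkit
variable {ι : Type} [Fintype ι] {M : Type u} [AddCommGroup M] [Module Rᵐᵒᵖ M]

theorem mem_sol {φ : PP R ι} {a : ι → M} :
    a ∈ φ.sol M ↔ ∃ b : φ.κ → M, ∀ j : φ.ε,
      (∑ i, op (φ.A i j) • a i) + (∑ k, op (φ.B k j) • b k) = 0 := Iff.rfl

theorem zero_mem_sol (φ : PP R ι) : (0 : ι → M) ∈ φ.sol M :=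
  ⟨0, fun j => by simp⟩

theorem sol_map_linear {N : Type u} [AddCommGroup N] [Module Rᵐᵒᵖ N] (g : M →ₗ[Rᵐᵒᵖ] N)
    (φ : PP R ι) {a : ι → M} (ha : a ∈ φ.sol M) : (fun i => g (a i)) ∈ φ.sol N := by
  obtain ⟨b, hb⟩ := ha
  refine ⟨fun k => g (b k), fun j => ?_⟩
  have := congrArg g (hb j)
  simpa [map_add, map_sum, map_smul] using this

/-- binary conjunction -/
def conj (φ ψ : PP R ι) : PP R ι where
  κ := φ.κ ⊕ ψ.κ
  ε := φ.ε ⊕ ψ.ε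
  A := fun i => Sum.elim (φ.A i) (ψ.A i)
  B := fun k e =>
    Sum.elim (fun k1 => Sum.elim (fun j1 => φ.B k1 j1) (fun _ => (0:R)) e)
             (fun k2 => Sum.elim (fun _ => (0:R)) (fun j2 => ψ.B k2 j2) e) k

theorem mem_sol_conj {φ ψ : PP R ι} {a : ι → M} :
    a ∈ (conj φ ψ).sol M ↔ a ∈ φ.sol M ∧ a ∈ ψ.sol M := by
  have econj : ∀ g : (conj φ ψ).κ → M, (∑ k, g k) = ∑ k : φ.κ ⊕ ψ.κ, g k := fun g => rfl
  constructor
  · rintro ⟨b, hb⟩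
    constructor
    · refine ⟨fun k => b (Sum.inl k), fun j => ?_⟩
      have := hb (Sum.inl j)
      rw [econj] at this
      simpa [conj, Fintype.sum_sum_type] using this
    · refine ⟨fun k => b (Sum.inr k), fun j => ?_⟩
      have := hb (Sum.inr j)
      rw [econj] at this
      simpa [conj, Fintype.sum_sum_type] using this
  · rintro ⟨⟨b1, hb1⟩, ⟨b2, hb2⟩⟩
    refine ⟨Sum.elim b1 b2, fun j => ?_⟩
    cases j with
    | inl j => rw [econj]; simpa [conj, Fintype.sum_sum_type] using hb1 j
    | inr j => rw [econj]; simpa [conj, Fintype.sum_sum_type] using hb2 j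

/-- trivial formula -/
def top : PP R ι where
  κ := Fin 0
  ε := Fin 0
  A := fun _ j => j.elim0
  B := fun _ j => j.elim0

theorem mem_sol_top (a : ι → M) : a ∈ (top : PP R ι).sol M :=
  ⟨fun k => k.elim0, fun j => j.elim0⟩

def conjList : List (PP R ι) → PP R ι
  | [] => top
  | φ :: l => conj φ (conjList l)

theorem mem_sol_conjList {l : List (PP R ι)} {a : ι → M} :
    a ∈ (conjList l).sol M ↔ ∀ φ ∈ l, a ∈ φ.sol M := by
  induction l with
  | nil => simp [conjList, mem_sol_top]
  | cons φ l ih => simp [conjList, mem_sol_conj, ih]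

/-- pushforward along a map of variable index types -/
def pushfwd {ι' : Type} [Fintype ι'] [DecidableEq ι'] (ρ : ι → ι') (φ : PP R ι) :
    PP R ι' where
  κ := φ.κ
  ε := φ.ε
  A := fun i' j => ∑ i ∈ Finset.univ.filter (fun i => ρ i = i'), φ.A i j
  B := φ.B

theorem mem_sol_pushfwd {ι' : Type} [Fintype ι'] [DecidableEq ι'] (ρ : ι → ι')
    (φ : PP R ι) (a : ι' → M) :
    a ∈ (pushfwd ρ φ).sol M ↔ (fun i => a (ρ i)) ∈ φ.sol M := by
  have key : ∀ j : φ.ε,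
      (∑ i', op ((pushfwd ρ φ).A i' j) • a i') = ∑ i, op (φ.A i j) • a (ρ i) := by
    intro j
    have : ∀ i' : ι', op ((pushfwd ρ φ).A i' j) • a i'
        = ∑ i ∈ Finset.univ.filter (fun i => ρ i = i'), op (φ.A i j) • a i' := by
      intro i'
      simp only [pushfwd]
      have hop : op (∑ i ∈ Finset.univ.filter (fun i => ρ i = i'), φ.A i j)
          = ∑ i ∈ Finset.univ.filter (fun i => ρ i = i'), op (φ.A i j) :=
        map_sum (opAddEquiv : R ≃+ Rᵐᵒᵖ) _ _
      rw [hop, Finset.sum_smul]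
    rw [Finset.sum_congr rfl (fun i' _ => this i')]
    rw [← Finset.sum_fiberwise Finset.univ ρ (fun i => op (φ.A i j) • a (ρ i))]
    refine Finset.sum_congr rfl fun i' _ => Finset.sum_congr rfl fun i hi => ?_
    have : ρ i = i' := by simpa using hi
    rw [this]
  constructor
  · rintro ⟨b, hb⟩; exact ⟨b, fun j => by rw [← key j]; exact hb j⟩
  · rintro ⟨b, hb⟩; exact ⟨b, fun j => by rw [key j]; exact hb j⟩

theorem mem_sol_pi {T : Type*} (N : T → Type u) [∀ t, AddCommGroup (N t)]
    [∀ t, Module Rᵐᵒᵖ (N t)] (φ : PP R ι) (a : ι → ∀ t, N t) :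
    a ∈ φ.sol (∀ t, N t) ↔ ∀ t, (fun i => a i t) ∈ φ.sol (N t) := by
  constructor
  · rintro ⟨b, hb⟩ t
    refine ⟨fun k => b k t, fun j => ?_⟩
    have := congrFun (hb j) t
    simpa [Finset.sum_apply] using this
  · intro h
    choose b hb using h
    refine ⟨fun k t => b t k, fun j => ?_⟩
    funext t
    simpa [Finset.sum_apply] using hb t j

end Toolkit

end S3
end MTM

namespace MTM
namespace S3

section Two
variable {R : Type u} [Ring R] {S : Type u} [Ring S] (f : R →+* S)

/-- the `R`-module structure on an `S`-module along `f` -/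
def rmodule (N : Type u) [AddCommGroup N] [Module Sᵐᵒᵖ N] : Module Rᵐᵒᵖ N :=
  Module.compHom N (RingHom.op f)

theorem sol_map_eq {ι : Type} [Fintype ι] (φ : PP R ι) (N : Type u) [AddCommGroup N]
    [Module Sᵐᵒᵖ N] : (φ.map f).sol N = (letI := rmodule f N; φ.sol N) := rfl

theorem rmodule_smul (N : Type u) [AddCommGroup N] [Module Sᵐᵒᵖ N] (r : R) (v : N) :
    (letI := rmodule f N; (op r) • v) = op (f r) • v := rfl

theorem sol_resMod {ι : Type} [Fintype ι] (φ : PP R ι) (N : ModuleCat.{u} Sᵐᵒᵖ) :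
    φ.sol (resMod R S f N : Type u) = (φ.map f).sol (N : Type u) := rfl

end Two
end S3
end MTM

namespace MTM
namespace S3

section Con
variable {R : Type u} [Ring R]

/-- a small (storable) constraint -/
structure RawCon (R : Type u) [Ring R] (M' : Type u) : Type u where
  n : ℕ
  k : ℕ
  e : ℕ
  a : Fin n → M'
  A : Matrix (Fin n) (Fin e) R
  B : Matrix (Fin k) (Fin e) R
  pos : Bool

variable {M' : Type u}

def RawCon.pp (c : RawCon R M') : PP R (Fin c.n) :=
  { κ := Fin c.k, ε := Fin c.e, A := c.A, B := c.B }

def RawCon.valid [AddCommGroup M'] [Module Rᵐᵒᵖ M'] (c : RawCon R M') : Prop :=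
  if c.pos then c.a ∈ c.pp.sol M' else c.a ∉ c.pp.sol M'

/-- storing an arbitrary pp formula plus tuple as a small constraint -/
noncomputable def toRaw {n : ℕ} (φ : PP R (Fin n)) (a : Fin n → M') (pos : Bool) :
    RawCon R M' where
  n := n
  k := Fintype.card φ.κ
  e := Fintype.card φ.ε
  a := a
  A := fun i j => φ.A i ((Fintype.equivFin φ.ε).symm j)
  B := fun k j => φ.B ((Fintype.equivFin φ.κ).symm k) ((Fintype.equivFin φ.ε).symm j)
  pos := pos

theorem sol_toRaw {n : ℕ} (φ : PP R (Fin n)) (a : Fin n → M') (pos : Bool)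
    (M : Type u) [AddCommGroup M] [Module Rᵐᵒᵖ M] :
    ((toRaw φ a pos).pp).sol M = φ.sol M := by
  ext x
  constructor
  · rintro ⟨b, hb⟩
    refine ⟨fun k => b ((Fintype.equivFin φ.κ) k), fun j => ?_⟩
    have h1 := hb ((Fintype.equivFin φ.ε) j)
    simp only [toRaw, RawCon.pp, Equiv.symm_apply_apply] at h1
    have e2 : ∑ k' : φ.κ, op (φ.B k' j) • b ((Fintype.equivFin φ.κ) k')
        = ∑ k : Fin (Fintype.card φ.κ), op (φ.B ((Fintype.equivFin φ.κ).symm k) j) • b k :=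
      Fintype.sum_equiv (Fintype.equivFin φ.κ) _ _ (fun k => by simp)
    rw [e2]
    exact h1
  · rintro ⟨b, hb⟩
    refine ⟨fun k => b ((Fintype.equivFin φ.κ).symm k), fun j => ?_⟩
    have h1 := hb ((Fintype.equivFin φ.ε).symm j)
    have e2 : ∑ k : Fin (Fintype.card φ.κ),
          op (φ.B ((Fintype.equivFin φ.κ).symm k) ((Fintype.equivFin φ.ε).symm j))
            • b ((Fintype.equivFin φ.κ).symm k)
        = ∑ k' : φ.κ, op (φ.B k' ((Fintype.equivFin φ.ε).symm j)) • b k' :=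
      (Fintype.sum_equiv (Fintype.equivFin φ.κ).symm _ _ (fun k => rfl))
    show (∑ i, op (φ.A i ((Fintype.equivFin φ.ε).symm j)) • x i)
        + (∑ k : Fin (Fintype.card φ.κ),
            op (φ.B ((Fintype.equivFin φ.κ).symm k) ((Fintype.equivFin φ.ε).symm j))
              • b ((Fintype.equivFin φ.κ).symm k)) = 0
    rw [e2]
    exact h1
end Con
end S3
end MTM

namespace MTM
namespace S3

section Concrete
variable {R : Type u} [Ring R] {M' : Type u} [AddCommGroup M'] [Module Rᵐᵒᵖ M']

/-- a quantifier-free single-equation constraint -/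
def lcCon {n : ℕ} (a : Fin n → M') (A : Fin n → R) (pos : Bool) : RawCon R M' where
  n := n; k := 0; e := 1
  a := a
  A := fun i _ => A i
  B := fun k _ => k.elim0
  pos := pos

theorem mem_sol_lcCon {n : ℕ} {a : Fin n → M'} {A : Fin n → R} {pos : Bool}
    (M : Type u) [AddCommGroup M] [Module Rᵐᵒᵖ M] (v : Fin n → M) :
    v ∈ (lcCon a A pos).pp.sol M ↔ ∑ i, op (A i) • v i = 0 := by
  have e0 : ∀ g : (lcCon a A pos).pp.κ → M, (∑ k, g k) = 0 :=
    fun g => Finset.sum_eq_zero (fun k _ => Fin.elim0 k)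
  constructor
  · rintro ⟨b, hb⟩
    have h1 := hb ⟨0, Nat.zero_lt_one⟩
    rw [e0, add_zero] at h1
    exact h1
  · intro h
    refine ⟨fun k => k.elim0, fun j => ?_⟩
    rw [e0, add_zero]
    exact h

noncomputable def conAdd (x y : M') : RawCon R M' :=
  lcCon ![x, y, x + y] ![1, 1, -1] true

theorem mem_sol_conAdd {x y : M'} (M : Type u) [AddCommGroup M] [Module Rᵐᵒᵖ M]
    (v : Fin 3 → M) :
    v ∈ (conAdd x y (R := R)).pp.sol M ↔ v 0 + v 1 = v 2 := by
  unfold conAdd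
  rw [mem_sol_lcCon, Fin.sum_univ_three]
  simp only [Matrix.cons_val_zero, Matrix.cons_val_one, Matrix.head_cons]
  rw [op_one, one_smul, one_smul]
  have : (![(1:R), 1, -1] 2) = -1 := rfl
  rw [this, op_neg, op_one, neg_smul, one_smul]
  constructor
  · intro h; have := add_eq_zero_iff_eq_neg.mp h; rw [neg_neg] at this; exact this
  · intro h; rw [h]; abel

theorem valid_conAdd (x y : M') : (conAdd x y (R := R)).valid := by
  have hpos : (conAdd x y (R := R)).pos = true := rfl
  rw [RawCon.valid, hpos, if_pos rfl]
  refine (mem_sol_conAdd _ _).2 ?_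
  simp [conAdd, lcCon]

noncomputable def conSmul (r : R) (x : M') : RawCon R M' :=
  lcCon ![x, op r • x] ![r, -1] true

theorem mem_sol_conSmul {r : R} {x : M'} (M : Type u) [AddCommGroup M] [Module Rᵐᵒᵖ M]
    (v : Fin 2 → M) :
    v ∈ (conSmul r x).pp.sol M ↔ op r • v 0 = v 1 := by
  unfold conSmul
  rw [mem_sol_lcCon, Fin.sum_univ_two]
  simp only [Matrix.cons_val_zero, Matrix.cons_val_one, Matrix.head_cons]
  rw [op_neg, op_one, neg_smul, one_smul]
  constructor
  · intro h; have := add_eq_zero_iff_eq_neg.mp h; rw [neg_neg] at this; exact this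
  · intro h; rw [h]; abel

theorem valid_conSmul (r : R) (x : M') : (conSmul r x).valid := by
  have hpos : (conSmul r x).pos = true := rfl
  rw [RawCon.valid, hpos, if_pos rfl]
  refine (mem_sol_conSmul _ _).2 ?_
  simp [conSmul, lcCon]

noncomputable def conZero (x : M') : RawCon R M' :=
  lcCon ![x] ![1] false

theorem mem_sol_conZero {x : M'} (M : Type u) [AddCommGroup M] [Module Rᵐᵒᵖ M]
    (v : Fin 1 → M) :
    v ∈ (conZero x (R := R)).pp.sol M ↔ v 0 = 0 := by
  unfold conZero
  rw [mem_sol_lcCon, Fin.sum_univ_one]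
  simp only [Matrix.cons_val_zero]
  rw [op_one, one_smul]

theorem valid_conZero (x : M') (hx : x ≠ 0) : (conZero x (R := R)).valid := by
  have hpos : (conZero x (R := R)).pos = false := rfl
  rw [RawCon.valid, hpos]
  simp only [Bool.false_eq_true, if_false]
  refine mt (mem_sol_conZero _ _).1 ?_
  simpa [conZero, lcCon] using hx

end Concrete
end S3
end MTM

namespace MTM
namespace S3

section Los
variable (S : Type u) [Ring S] {I : Type u} (U : Ultrafilter I) (N : I → Type u)
  [∀ i, AddCommGroup (N i)] [∀ i, Module Sᵐᵒᵖ (N i)]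

/-- the submodule of a product of elements vanishing `U`-almost everywhere -/
def aeZero : Submodule Sᵐᵒᵖ (∀ i, N i) where
  carrier := {x | {i | x i = 0} ∈ U}
  add_mem' := fun {x y} hx hy => Filter.mem_of_superset (Filter.inter_mem hx hy)
    (fun i hi => by
      simp only [Set.mem_setOf_eq, Set.mem_inter_iff] at hi ⊢
      simp [Pi.add_apply, hi.1, hi.2])
  zero_mem' := by
    simp only [Set.mem_setOf_eq, Pi.zero_apply]
    exact Filter.univ_mem' fun i => trivial
  smul_mem' := fun s x hx => Filter.mem_of_superset hx (fun i hi => by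
    simp only [Set.mem_setOf_eq] at hi ⊢
    simp [hi])

theorem los_fwd {ι : Type} [Fintype ι] (χ : PP S ι) (x : ι → ∀ i, N i)
    (h : {i | (fun j => x j i) ∈ χ.sol (N i)} ∈ U) :
    (fun j => (aeZero S U N).mkQ (x j))
      ∈ χ.sol ((∀ i, N i) ⧸ aeZero S U N) := by
  classical
  set b : χ.κ → ∀ i, N i :=
    fun k i => if hi : (fun j => x j i) ∈ χ.sol (N i) then hi.choose k else 0 with hbdef
  refine ⟨fun k => (aeZero S U N).mkQ (b k), fun j => ?_⟩
  show (∑ i, op (χ.A i j) • (aeZero S U N).mkQ (x i))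
      + (∑ k, op (χ.B k j) • (aeZero S U N).mkQ (b k)) = 0
  rw [show (∑ i, op (χ.A i j) • (aeZero S U N).mkQ (x i))
        + (∑ k, op (χ.B k j) • (aeZero S U N).mkQ (b k))
      = (aeZero S U N).mkQ ((∑ i, op (χ.A i j) • x i) + (∑ k, op (χ.B k j) • b k)) by
    simp only [map_add, map_sum, map_smul]]
  rw [Submodule.mkQ_apply, Submodule.Quotient.mk_eq_zero]
  refine Filter.mem_of_superset h (fun i hi => ?_)
  simp only [Set.mem_setOf_eq] at hi ⊢
  show ((∑ v, op (χ.A v j) • x v) + (∑ k, op (χ.B k j) • b k)) i = 0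
  have hb : ∀ k, b k i = hi.choose k := fun k => dif_pos hi
  have hspec := hi.choose_spec j
  simp only [Pi.add_apply, Finset.sum_apply, Pi.smul_apply, hb]
  exact hspec

theorem los_bwd {ι : Type} [Fintype ι] (χ : PP S ι) (x : ι → ∀ i, N i)
    (h : (fun j => (aeZero S U N).mkQ (x j))
      ∈ χ.sol ((∀ i, N i) ⧸ aeZero S U N)) :
    {i | (fun j => x j i) ∈ χ.sol (N i)} ∈ U := by
  classical
  obtain ⟨b, hb⟩ := h
  choose bb hbb using fun k => Submodule.mkQ_surjective (aeZero S U N) (b k)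
  have hEj : ∀ j : χ.ε,
      {i | ((∑ v, op (χ.A v j) • x v) + (∑ k, op (χ.B k j) • bb k)) i = 0} ∈ U := by
    intro j
    have h1 := hb j
    rw [show (∑ i, op (χ.A i j) • (aeZero S U N).mkQ (x i))
          + (∑ k, op (χ.B k j) • b k)
        = (aeZero S U N).mkQ ((∑ i, op (χ.A i j) • x i) + (∑ k, op (χ.B k j) • bb k)) by
      simp only [map_add, map_sum, map_smul]
      congr 1
      exact Finset.sum_congr rfl fun k _ => by rw [hbb k]] at h1
    rw [Submodule.mkQ_apply, Submodule.Quotient.mk_eq_zero] at h1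
    exact h1
  have hall : {i | ∀ j : χ.ε,
      ((∑ v, op (χ.A v j) • x v) + (∑ k, op (χ.B k j) • bb k)) i = 0} ∈ U := by
    have : (⋂ j : χ.ε, {i | ((∑ v, op (χ.A v j) • x v) + (∑ k, op (χ.B k j) • bb k)) i = 0})
        ∈ U := (Filter.iInter_mem).2 hEj
    refine Filter.mem_of_superset this ?_
    intro i hi
    simp only [Set.mem_iInter, Set.mem_setOf_eq] at hi ⊢
    exact hi
  refine Filter.mem_of_superset hall (fun i hi => ?_)
  simp only [Set.mem_setOf_eq] at hi ⊢
  refine ⟨fun k => bb k i, fun j => ?_⟩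
  have := hi j
  simpa only [Pi.add_apply, Finset.sum_apply, Pi.smul_apply] using this

end Los
end S3
end MTM

namespace MTM
namespace S3

section Helpers
variable {R : Type u} [Ring R] {S : Type u} [Ring S]

theorem valid_pos {X : Type u} [AddCommGroup X] [Module Rᵐᵒᵖ X] {c : RawCon R X}
    (h : c.valid) (hp : c.pos = true) : c.a ∈ c.pp.sol X := by
  simpa [RawCon.valid, hp] using h

theorem valid_neg {X : Type u} [AddCommGroup X] [Module Rᵐᵒᵖ X] {c : RawCon R X}
    (h : c.valid) (hp : c.pos = false) : c.a ∉ c.pp.sol X := by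
  simpa [RawCon.valid, hp] using h

theorem mem_foldr_union {α : Type*} {β : Type u} [DecidableEq β] (l : List α)
    (F : α → Finset β) {c : α} (hc : c ∈ l) :
    F c ⊆ l.foldr (fun a s => F a ∪ s) ∅ := by
  induction l with
  | nil => cases hc
  | cons a l ih =>
    rcases List.mem_cons.1 hc with h | h
    · subst h; exact Finset.subset_union_left
    · exact (ih h).trans Finset.subset_union_right

/-- satisfaction of a constraint by a map into (the restriction of) an `S`-module -/
def Sat (f : R →+* S) {X N : Type u} [AddCommGroup N] [Module Sᵐᵒᵖ N]
    (c : RawCon R X) (u : X → N) : Prop :=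
  if c.pos then (fun j => u (c.a j)) ∈ (c.pp.map f).sol N
  else (fun j => u (c.a j)) ∉ (c.pp.map f).sol N

end Helpers

section Realize
variable {R : Type u} [Ring R] {S : Type u} [Ring S] (f : R →+* S)
variable {X : Type u} [AddCommGroup X] [Module Rᵐᵒᵖ X]
variable {C : Set (ModuleCat.{u} Sᵐᵒᵖ)}

theorem realize1
    (hM' : ∀ p : PPPair R,
      (∀ M ∈ C, (p.num.map f).sol (M : Type u) = (p.den.map f).sol (M : Type u)) →
      p.num.sol X = p.den.sol X)
    (l : List {c : RawCon R X // c.valid}) (d : RawCon R X) (hd : d.valid)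
    (hdneg : d.pos = false) :
    ∃ N ∈ C, ∃ u : X → (N : Type u),
      (∀ c ∈ l, c.1.pos = true → Sat f c.1 u) ∧ Sat f d u := by
  classical
  set lp := l.filter (fun c => c.1.pos = true) with hlp
  set A : Finset X := (Finset.image d.a Finset.univ) ∪
      lp.foldr (fun c s => (Finset.image c.1.a Finset.univ) ∪ s) ∅ with hA
  have hdA : ∀ j, d.a j ∈ A :=
    fun j => Finset.mem_union_left _ (Finset.mem_image_of_mem _ (Finset.mem_univ j))
  have hlA : ∀ c ∈ lp, ∀ j, (c : {c : RawCon R X // c.valid}).1.a j ∈ A := by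
    intro c hc j
    exact Finset.mem_union_right _
      (mem_foldr_union lp (fun c => Finset.image c.1.a Finset.univ) hc
        (Finset.mem_image_of_mem _ (Finset.mem_univ j)))
  set n := A.card with hn
  set eA := A.equivFin with heA
  set ρ : ∀ (c : RawCon R X), (∀ j, c.a j ∈ A) → Fin c.n → Fin n :=
    fun c hc j => eA ⟨c.a j, hc j⟩ with hρ
  set val : Fin n → X := fun v => ((eA.symm v) : X) with hval
  have hvalρ : ∀ (c : RawCon R X) (hc : ∀ j, c.a j ∈ A),
      (fun j => val (ρ c hc j)) = c.a := by
    intro c hc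
    funext j
    simp [hval, hρ]
  set Φp : PP R (Fin n) :=
    conjList (lp.attach.map fun c => pushfwd (ρ c.1.1 (hlA c.1 c.2)) c.1.1.pp) with hΦp
  set ψh : PP R (Fin n) := pushfwd (ρ d hdA) d.pp with hψh
  have hvalp : val ∈ Φp.sol X := by
    rw [hΦp, mem_sol_conjList]
    intro φ hφ
    obtain ⟨c, -, rfl⟩ := List.mem_map.1 hφ
    rw [mem_sol_pushfwd]
    have := hvalρ c.1.1 (hlA c.1 c.2)
    simp only [hρ] at this ⊢
    rw [show (fun i => val (eA ⟨c.1.1.a i, hlA c.1 c.2 i⟩)) = c.1.1.a from this]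
    exact valid_pos c.1.2 (by simpa using (List.mem_filter.1 c.2).2)
  have hvaln : val ∉ ψh.sol X := by
    rw [hψh, mem_sol_pushfwd]
    have := hvalρ d hdA
    simp only [hρ] at this ⊢
    rw [show (fun i => val (eA ⟨d.a i, hdA i⟩)) = d.a from this]
    exact valid_neg hd hdneg
  set p : PPPair R :=
    { n := n, num := Φp, den := conj Φp ψh,
      le := fun M _ _ a ha => (mem_sol_conj.1 ha).1 } with hp
  have hnotclosed : ¬(p.num.sol X = p.den.sol X) := by
    intro h
    rw [hp] at h
    simp only at h
    rw [h] at hvalp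
    exact hvaln (mem_sol_conj.1 hvalp).2
  have hnot : ¬∀ M ∈ C, (p.num.map f).sol (M : Type u) = (p.den.map f).sol (M : Type u) :=
    fun h => hnotclosed (hM' p h)
  push_neg at hnot
  obtain ⟨N, hN, hneq⟩ := hnot
  letI : Module Rᵐᵒᵖ (N : Type u) := rmodule f (N : Type u)
  have hsub : (p.den.map f).sol (N : Type u) ⊆ (p.num.map f).sol (N : Type u) := by
    rw [sol_map_eq f, sol_map_eq f]
    exact fun a ha => (mem_sol_conj.1 ha).1
  have hex : ∃ cb, cb ∈ (p.num.map f).sol (N : Type u) ∧ cb ∉ (p.den.map f).sol (N : Type u) := by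
    by_contra hcon
    push_neg at hcon
    exact hneq (Set.Subset.antisymm hcon hsub)
  obtain ⟨cb, hcb1, hcb2⟩ := hex
  rw [sol_map_eq f] at hcb1 hcb2
  have hcbΦ : cb ∈ Φp.sol (N : Type u) := hcb1
  have hcbψ : cb ∉ ψh.sol (N : Type u) := by
    intro hmem
    exact hcb2 (mem_sol_conj.2 ⟨hcb1, hmem⟩)
  set u : X → (N : Type u) := fun x => if h : x ∈ A then cb (eA ⟨x, h⟩) else 0 with hu
  have hu' : ∀ (c : RawCon R X) (hc : ∀ j, c.a j ∈ A),
      (fun j => u (c.a j)) = fun j => cb (ρ c hc j) := by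
    intro c hc
    funext j
    rw [hu]
    simp only [hρ]
    rw [dif_pos (hc j)]
  refine ⟨N, hN, u, ?_, ?_⟩
  · intro c hc hcpos
    have hclp : c ∈ lp := List.mem_filter.2 ⟨hc, by simp [hcpos]⟩
    rw [Sat, if_pos hcpos, sol_map_eq f]
    rw [hu' c.1 (hlA c hclp)]
    have : pushfwd (ρ c.1 (hlA c hclp)) c.1.pp ∈
        (lp.attach.map fun c => pushfwd (ρ c.1.1 (hlA c.1 c.2)) c.1.1.pp) :=
      List.mem_map.2 ⟨⟨c, hclp⟩, List.mem_attach _ _, rfl⟩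
    have h2 := (mem_sol_conjList.1 hcbΦ) _ this
    rw [mem_sol_pushfwd] at h2
    exact h2
  · rw [Sat, if_neg (by simp [hdneg]), sol_map_eq f]
    rw [hu' d hdA]
    intro hmem
    apply hcbψ
    rw [hψh, mem_sol_pushfwd]
    exact hmem

end Realize
end S3
end MTM

namespace MTM
namespace S3

section Realize2
variable {R : Type u} [Ring R] {S : Type u} [Ring S] (f : R →+* S)
variable {X : Type u} [AddCommGroup X] [Module Rᵐᵒᵖ X]
variable {C : Set (ModuleCat.{u} Sᵐᵒᵖ)} {Φs : Set (PPPair S)}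

theorem realize (hC : C = definedBy S Φs)
    (hM' : ∀ p : PPPair R,
      (∀ M ∈ C, (p.num.map f).sol (M : Type u) = (p.den.map f).sol (M : Type u)) →
      p.num.sol X = p.den.sol X)
    (l : List {c : RawCon R X // c.valid}) :
    ∃ (N : ModuleCat.{u} Sᵐᵒᵖ) (u : X → (N : Type u)),
      N ∈ C ∧ ∀ c ∈ l, Sat f c.1 u := by
  classical
  set negs := l.filter (fun c => c.1.pos = false) with hnegs
  have h1 : ∀ m : Fin negs.length, ∃ N ∈ C, ∃ u : X → (N : Type u),
      (∀ c ∈ l, c.1.pos = true → Sat f c.1 u) ∧ Sat f (negs.get m).1 u := by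
    intro m
    refine realize1 f hM' l (negs.get m).1 (negs.get m).2 ?_
    have : negs.get m ∈ negs := List.get_mem negs m
    simpa using (List.mem_filter.1 this).2
  choose NN hNN uu huu using h1
  refine ⟨ModuleCat.of Sᵐᵒᵖ (∀ m, ((NN m) : Type u)), fun x m => uu m x, ?_, ?_⟩
  · rw [hC]
    intro p hp
    show p.num.sol (∀ m, ((NN m) : Type u)) = p.den.sol _
    ext a
    rw [mem_sol_pi, mem_sol_pi]
    constructor
    · intro h m
      have hcl := (hC ▸ hNN m) p hp
      have : p.num.sol ((NN m : Type u)) = p.den.sol _ := hcl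
      rw [← this]
      exact h m
    · intro h m
      exact p.le _ (h m)
  · intro c hc
    by_cases hcpos : c.1.pos = true
    · rw [Sat, if_pos hcpos, sol_map_eq f]
      letI : ∀ m, Module Rᵐᵒᵖ ((NN m : Type u)) := fun m => rmodule f _
      refine (mem_sol_pi (fun m => ((NN m) : Type u)) c.1.pp
        (fun j m => uu m (c.1.a j))).2 (fun m => ?_)
      have hsat := (huu m).1 c hc hcpos
      rw [Sat, if_pos hcpos, sol_map_eq f] at hsat
      exact hsat
    · have hcneg : c.1.pos = false := by
        cases h : c.1.pos
        · rfl
        · exact absurd h hcpos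
      have hmem : c ∈ negs := List.mem_filter.2 ⟨hc, by simp [hcneg]⟩
      obtain ⟨m, hm⟩ := List.mem_iff_get.1 hmem
      rw [Sat, if_neg (by simp [hcneg]), sol_map_eq f]
      intro hcontra
      have hsat := (huu m).2
      rw [hm] at hsat
      rw [Sat, if_neg (by simp [hcneg]), sol_map_eq f] at hsat
      apply hsat
      letI : ∀ m, Module Rᵐᵒᵖ ((NN m : Type u)) := fun m => rmodule f _
      exact (mem_sol_pi (fun m => ((NN m) : Type u)) c.1.pp
        (fun j m => uu m (c.1.a j))).1 hcontra m

end Realize2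
end S3
end MTM

namespace MTM
namespace S3

section SatIff
variable {R : Type u} [Ring R] {S : Type u} [Ring S] {f : R →+* S}
variable {X N : Type u} [AddCommGroup N] [Module Sᵐᵒᵖ N]

theorem sat_iff_pos {c : RawCon R X} (hc : c.pos = true) (u : X → N) :
    Sat f c u ↔ (fun j => u (c.a j)) ∈ (c.pp.map f).sol N := by
  rw [Sat, if_pos hc]

theorem sat_iff_neg {c : RawCon R X} (hc : c.pos = false) (u : X → N) :
    Sat f c u ↔ (fun j => u (c.a j)) ∉ (c.pp.map f).sol N := by
  rw [Sat, if_neg (by simp [hc])]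

end SatIff

section Main
variable {R : Type u} [Ring R] {S : Type u} [Ring S] (f : R →+* S)

/-- index type for the ultraproduct -/
abbrev ConT (R : Type u) [Ring R] (X : Type u) [AddCommGroup X] [Module Rᵐᵒᵖ X] :
    Type u := List {c : RawCon R X // c.valid}

theorem hard {X : Type u} [AddCommGroup X] [Module Rᵐᵒᵖ X]
    {C : Set (ModuleCat.{u} Sᵐᵒᵖ)} {Φs : Set (PPPair S)} (hC : C = definedBy S Φs)
    (hM' : ∀ p : PPPair R,
      (∀ M ∈ C, (p.num.map f).sol (M : Type u) = (p.den.map f).sol (M : Type u)) →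
      p.num.sol X = p.den.sol X) :
    ∃ M ∈ C, ∃ g : X →ₗ[Rᵐᵒᵖ] (resMod R S f M : Type u), IsPureEmb R g := by
  classical
  choose NN uu hh using realize f hC hM'
  set F : Filter (ConT R X) :=
    { sets := {s | ∃ i₀ : ConT R X, {i | ∀ c ∈ i₀, c ∈ i} ⊆ s},
      univ_sets := ⟨[], fun i _ => trivial⟩,
      sets_of_superset := fun hs hst => hs.imp (fun _ h => h.trans hst),
      inter_sets := fun ⟨i₀, h₀⟩ ⟨i₁, h₁⟩ =>
        ⟨i₀ ++ i₁, fun i hi =>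
          ⟨h₀ (fun c hc => hi c (List.mem_append.2 (Or.inl hc))),
           h₁ (fun c hc => hi c (List.mem_append.2 (Or.inr hc)))⟩⟩ } with hF
  haveI hFne : F.NeBot := by
    refine Filter.forall_mem_nonempty_iff_neBot.1 (fun s hs => ?_)
    obtain ⟨i₀, h⟩ := hs
    exact ⟨i₀, h (fun c hc => hc)⟩
  set U := Ultrafilter.of F with hUdef
  have hUc : ∀ c : {c : RawCon R X // c.valid}, {i : ConT R X | c ∈ i} ∈ U := by
    intro c
    refine (Ultrafilter.of_le F) ?_
    exact ⟨[c], fun i hi => hi c (by simp)⟩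
  set Z := aeZero S U (fun i => ((NN i) : Type u)) with hZ
  set Q := (∀ i : ConT R X, ((NN i) : Type u)) ⧸ Z with hQ
  have hQmem : ModuleCat.of Sᵐᵒᵖ Q ∈ C := by
    rw [hC]
    intro p hp
    show p.num.sol Q = p.den.sol Q
    apply Set.Subset.antisymm
    · intro a ha
      choose x hx using fun j => Submodule.mkQ_surjective Z (a j)
      have hax : a = fun j => Z.mkQ (x j) := funext fun j => (hx j).symm
      rw [hax] at ha ⊢
      have hb := los_bwd S U _ p.num x ha
      refine los_fwd S U _ p.den x (Filter.mem_of_superset hb ?_)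
      intro i hi
      simp only [Set.mem_setOf_eq] at hi ⊢
      have hcl : p.num.sol ((NN i : Type u)) = p.den.sol ((NN i : Type u)) := by
        have := (hh i).1
        rw [hC] at this
        exact this p hp
      rw [← hcl]
      exact hi
    · exact p.le Q
  set gfun : X → Q := fun x => Z.mkQ (fun i => uu i x) with hgfun
  have hadd : ∀ x y : X, gfun (x + y) = gfun x + gfun y := by
    intro x y
    show Z.mkQ (fun i => uu i (x + y)) = Z.mkQ (fun i => uu i x) + Z.mkQ (fun i => uu i y)
    rw [← map_add, Submodule.mkQ_apply, Submodule.mkQ_apply, Submodule.Quotient.eq]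
    refine Filter.mem_of_superset (hUc ⟨conAdd x y, valid_conAdd x y⟩) ?_
    intro i hi
    simp only [Set.mem_setOf_eq] at hi ⊢
    have hsat := (hh i).2 _ hi
    rw [sat_iff_pos rfl, sol_map_eq f] at hsat
    letI := rmodule f ((NN i : Type u))
    replace hsat : uu i (![x, y, x + y] 0) + uu i (![x, y, x + y] 1) = uu i (![x, y, x + y] 2) :=
      (mem_sol_conAdd _ _).1 hsat
    simp only [Matrix.cons_val_zero, Matrix.cons_val_one, Matrix.head_cons] at hsat
    have h2 : uu i x + uu i y = uu i (x + y) := by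
      have : (![x, y, x + y] 2) = x + y := rfl
      rw [← this]
      convert hsat using 2
    show uu i (x + y) - (uu i x + uu i y) = 0
    rw [h2, sub_self]
  have hsmul : ∀ (r : Rᵐᵒᵖ) (x : X),
      gfun (r • x) = op (f r.unop) • gfun x := by
    intro r x
    show Z.mkQ (fun i => uu i (r • x)) = op (f r.unop) • Z.mkQ (fun i => uu i x)
    rw [← map_smul, Submodule.mkQ_apply, Submodule.mkQ_apply, Submodule.Quotient.eq]
    refine Filter.mem_of_superset (hUc ⟨conSmul r.unop x, valid_conSmul r.unop x⟩) ?_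
    intro i hi
    simp only [Set.mem_setOf_eq] at hi ⊢
    have hsat := (hh i).2 _ hi
    rw [sat_iff_pos rfl, sol_map_eq f] at hsat
    letI := rmodule f ((NN i : Type u))
    replace hsat : op r.unop • uu i (![x, op r.unop • x] 0) = uu i (![x, op r.unop • x] 1) :=
      (mem_sol_conSmul _ _).1 hsat
    simp only [Matrix.cons_val_zero, Matrix.cons_val_one, Matrix.head_cons] at hsat
    have h2 : op (f r.unop) • uu i x = uu i (op r.unop • x) := by
      rw [← rmodule_smul f]
      exact hsat
    show uu i (r • x) - op (f r.unop) • uu i x = 0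
    rw [h2, op_unop, sub_self]
  have hzero : ∀ x : X, gfun x = 0 → x = 0 := by
    intro x hgx
    by_contra hne
    have hgx2 : (fun i => uu i x) ∈ Z := by
      rw [← Submodule.Quotient.mk_eq_zero, ← Submodule.mkQ_apply]
      exact hgx
    replace hgx := hgx2
    have hmem := Filter.inter_mem (hUc ⟨conZero x, valid_conZero x hne⟩) hgx
    obtain ⟨i, hi1, hi2⟩ := Filter.nonempty_of_mem hmem
    have hsat := (hh i).2 _ hi1
    rw [sat_iff_neg rfl, sol_map_eq f] at hsat
    apply hsat
    letI := rmodule f ((NN i : Type u))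
    refine (mem_sol_conZero (x := x) _ (fun j => uu i (![x] j))).2 ?_
    have : ((fun i => uu i x) : ∀ i : ConT R X, ((NN i) : Type u)) i = 0 := hi2
    simpa using this
  refine ⟨ModuleCat.of Sᵐᵒᵖ Q, hQmem,
    { toFun := gfun, map_add' := hadd, map_smul' := hsmul }, ?_, ?_⟩
  · -- injectivity
    intro x y hxy
    have h0 : gfun (x - y) = 0 := by
      have h1 := hadd (x - y) y
      rw [sub_add_cancel] at h1
      have h2 : gfun (x - y) = gfun x - gfun y := eq_sub_of_add_eq h1.symm
      rw [h2]
      change gfun x = gfun y at hxy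
      rw [hxy, sub_self]
    have := hzero _ h0
    exact sub_eq_zero.1 this
  · -- pp reflection
    intro ι hι φ a hsol
    by_contra hna
    set e := Fintype.equivFin ι with he
    have hval : (a ∘ e.symm) ∉ ((toRaw (pushfwd e φ) (a ∘ e.symm) false).pp).sol X := by
      rw [sol_toRaw]
      show a ∘ e.symm ∉ (pushfwd e φ).sol X
      rw [mem_sol_pushfwd]
      intro hmem
      apply hna
      have : (fun i => (a ∘ e.symm) (e i)) = a := by
        funext i; simp
      rwa [this] at hmem
    have hvalid : (toRaw (pushfwd e φ) (a ∘ e.symm) false).valid := by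
      rw [RawCon.valid]
      simp only [toRaw, Bool.false_eq_true, if_false]
      exact hval
    set c : {c : RawCon R X // c.valid} := ⟨_, hvalid⟩ with hc
    -- from the solution in Q, a U-large set of coordinates satisfies φ
    have hsolQ : (fun j => Z.mkQ (fun i => uu i (a j))) ∈ (φ.map f).sol Q := by
      have := hsol
      rw [sol_resMod] at this
      exact this
    have hbig := los_bwd S U _ (φ.map f) (fun j i => uu i (a j)) hsolQ
    have hmem := Filter.inter_mem (hUc c) hbig
    obtain ⟨i, hi1, hi2⟩ := Filter.nonempty_of_mem hmem
    have hsat := (hh i).2 _ hi1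
    rw [sat_iff_neg rfl, sol_map_eq f] at hsat
    apply hsat
    letI := rmodule f ((NN i : Type u))
    rw [show (c : {c : RawCon R X // c.valid}).1 = toRaw (pushfwd e φ) (a ∘ e.symm) false
      from rfl]
    rw [sol_toRaw]
    show (fun j : Fin (Fintype.card ι) => uu i ((toRaw (pushfwd e φ) (a ∘ e.symm) false).a j))
      ∈ (pushfwd e φ).sol (NN i : Type u)
    rw [mem_sol_pushfwd]
    simp only [Set.mem_setOf_eq] at hi2
    rw [sol_map_eq f] at hi2
    have hfin : (fun v => uu i ((toRaw (pushfwd (⇑e) φ) (a ∘ ⇑e.symm) false).a (e v)))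
        = fun v => uu i (a v) := by
      funext v
      show uu i ((a ∘ ⇑e.symm) (e v)) = uu i (a v)
      simp
    rw [hfin]
    exact hi2

end Main
end S3
end MTM

namespace MTM

/-- For a ring homomorphism `f : R → S` and a definable subcategory
`C` of `Mod-S`, the restriction `C|_R` is exactly the class of right `R`-modules
which purely embed in the restriction along `f` of some member of `C`. -/
theorem statement3 (R S : Type u) [Ring R] [Ring S] (f : R →+* S)
    (C : Set (ModuleCat.{u} Sᵐᵒᵖ)) (hC : IsDefinable S C) :
    restrictSubcat R S f C =
      { M' : ModuleCat.{u} Rᵐᵒᵖ |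
        ∃ M ∈ C, ∃ g : M' →ₗ[Rᵐᵒᵖ] (resMod R S f M), IsPureEmb R g } := by
  obtain ⟨Φs, hCd⟩ := hC
  ext M'
  constructor
  · intro hM'
    have hM'2 : ∀ p : PPPair R,
        (∀ M ∈ C, (p.num.map f).sol (M : Type u) = (p.den.map f).sol (M : Type u)) →
        p.num.sol (M' : Type u) = p.den.sol (M' : Type u) := fun p hp => hM' p hp
    exact S3.hard f hCd hM'2
  · rintro ⟨M, hM, g, hg⟩
    intro p hp
    show p.num.sol (M' : Type u) = p.den.sol (M' : Type u)
    apply Set.Subset.antisymm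
    · intro a ha
      have h1 : (fun i => g (a i)) ∈ p.num.sol (resMod R S f M : Type u) :=
        S3.sol_map_linear g p.num ha
      rw [S3.sol_resMod f, hp M hM, ← S3.sol_resMod f] at h1
      exact hg.2 (Fin p.n) inferInstance p.den a h1
    · exact p.le (M' : Type u)

end MTM
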